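/- There exist pairwise disjoint two-element sets $A_1=\{a,b\}$, $A_2=\{c,d\}$ and a monotone submodular function $v:2^{\{a,b,c,d\}}\to\mathbb{R}_{\ge 0}$ (explicitly: $v(\emptyset)=0$, $v(b)=2.503$, $v(d)=2.703$, $v(c)=2.803$, $v(a)=3.203$, $v(cd)=4.1045$, $v(ab)=4.4045$, $v(bd)=5.204$, $v(bc)=v(ad)=5.304$, $v(ac)=5.404$, $v(acd)=v(abd)=6.5045$, $v(abc)=v(bcd)=6.6045$, $v(abcd)=7.6045$) such that the two-player game in which player $i$ chooses $S_i\subseteq A_i$ and receives payoff $u_i(S_1,S_2)=\sum_{x\in S_i}(v(S_1\cup S_2)-v((S_1\cup S_2)\setminus\{x\}))$ has no pure Nash equilibrium. -/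

import Mathlib

open Finset


def wi (T : Finset (Fin 4)) : ℤ :=
  match decide (0 ∈ T), decide (1 ∈ T), decide (2 ∈ T), decide (3 ∈ T) with
  | false, false, false, false => 0
  | true,  false, false, false => 32030
  | false, true,  false, false => 25030
  | false, false, true,  false => 28030
  | false, false, false, true  => 27030
  | true,  true,  false, false => 44045
  | true,  false, true,  false => 54040
  | true,  false, false, true  => 53040
  | false, true,  true,  false => 53040
  | false, true,  false, true  => 52040
  | false, false, true,  true  => 41045
  | true,  true,  true,  false => 66045
  | true,  true,  false, true  => 65045
  | true,  false, true,  true  => 65045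
  | false, true,  true,  true  => 66045
  | true,  true,  true,  true  => 76045

lemma wi_nonneg : ∀ T : Finset (Fin 4), 0 ≤ wi T := by decide
lemma wi_mono : ∀ S T : Finset (Fin 4), S ⊆ T → wi S ≤ wi T := by decide
lemma wi_submod : ∀ S T : Finset (Fin 4), wi S + wi T ≥ wi (S ∪ T) + wi (S ∩ T) := by decide
lemma wi_nash : ¬ ∃ S₁ S₂ : Finset (Fin 4), S₁ ⊆ {0, 1} ∧ S₂ ⊆ {2, 3} ∧
        (∀ S₁' ⊆ ({0, 1} : Finset (Fin 4)),
          ∑ x ∈ S₁', (wi (S₁' ∪ S₂) - wi ((S₁' ∪ S₂).erase x)) ≤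
            ∑ x ∈ S₁, (wi (S₁ ∪ S₂) - wi ((S₁ ∪ S₂).erase x))) ∧
        (∀ S₂' ⊆ ({2, 3} : Finset (Fin 4)),
          ∑ x ∈ S₂', (wi (S₁ ∪ S₂') - wi ((S₁ ∪ S₂').erase x)) ≤
            ∑ x ∈ S₂, (wi (S₁ ∪ S₂) - wi ((S₁ ∪ S₂).erase x))) := by decide

noncomputable def vr (T : Finset (Fin 4)) : ℝ := (wi T : ℝ) / 10000

lemma sum_vr (S : Finset (Fin 4)) (f g : Fin 4 → Finset (Fin 4)) :
    ∑ x ∈ S, (vr (f x) - vr (g x)) =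
      ((∑ x ∈ S, (wi (f x) - wi (g x)) : ℤ) : ℝ) / 10000 := by
  push_cast
  rw [Finset.sum_div]
  apply Finset.sum_congr rfl
  intros
  unfold vr
  ring

lemma vr_le_vr {S T : Finset (Fin 4)} (h : wi S ≤ wi T) : vr S ≤ vr T := by
  unfold vr
  rw [div_le_div_iff_of_pos_right (by norm_num)]
  exact_mod_cast h

/-- Items: `a = 0`, `b = 1`, `c = 2`, `d = 3`; vendor 1 owns `{a,b}`, vendor 2 owns `{c,d}`.
The payoff of each vendor is the sum of the marginal contributions of its offered items. -/
theorem no_pure_nash_counterexample :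
    ∃ v : Finset (Fin 4) → ℝ,
      (∀ T : Finset (Fin 4), 0 ≤ v T) ∧
      (∀ S T : Finset (Fin 4), S ⊆ T → v S ≤ v T) ∧
      (∀ S T : Finset (Fin 4), v S + v T ≥ v (S ∪ T) + v (S ∩ T)) ∧
      v ∅ = 0 ∧ v {0} = 3.203 ∧ v {1} = 2.503 ∧ v {2} = 2.803 ∧ v {3} = 2.703 ∧
      v {0, 1} = 4.4045 ∧ v {0, 2} = 5.404 ∧ v {0, 3} = 5.304 ∧
      v {1, 2} = 5.304 ∧ v {1, 3} = 5.204 ∧ v {2, 3} = 4.1045 ∧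
      v {0, 1, 2} = 6.6045 ∧ v {0, 1, 3} = 6.5045 ∧ v {0, 2, 3} = 6.5045 ∧
      v {1, 2, 3} = 6.6045 ∧ v {0, 1, 2, 3} = 7.6045 ∧
      ¬ ∃ S₁ S₂ : Finset (Fin 4), S₁ ⊆ {0, 1} ∧ S₂ ⊆ {2, 3} ∧
        (∀ S₁' ⊆ ({0, 1} : Finset (Fin 4)),
          ∑ x ∈ S₁', (v (S₁' ∪ S₂) - v ((S₁' ∪ S₂).erase x)) ≤
            ∑ x ∈ S₁, (v (S₁ ∪ S₂) - v ((S₁ ∪ S₂).erase x))) ∧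
        (∀ S₂' ⊆ ({2, 3} : Finset (Fin 4)),
          ∑ x ∈ S₂', (v (S₁ ∪ S₂') - v ((S₁ ∪ S₂').erase x)) ≤
            ∑ x ∈ S₂, (v (S₁ ∪ S₂) - v ((S₁ ∪ S₂).erase x))) := by
  refine ⟨vr, ?_, ?_, ?_, ?_, ?_, ?_, ?_, ?_, ?_, ?_, ?_, ?_, ?_, ?_, ?_, ?_, ?_, ?_, ?_, ?_⟩
  · intro T
    have := wi_nonneg T
    unfold vr
    positivity
  · intro S T h
    exact vr_le_vr (wi_mono S T h)
  · intro S T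
    have := wi_submod S T
    unfold vr
    rw [ge_iff_le, ← add_div, ← add_div, div_le_div_iff_of_pos_right (by norm_num)]
    exact_mod_cast this
  · show ((wi ∅ : ℝ)) / 10000 = 0; rw [show wi ∅ = 0 from rfl]; norm_num
  · show ((wi {0} : ℝ)) / 10000 = 3.203; rw [show wi {0} = 32030 from rfl]; norm_num
  · show ((wi {1} : ℝ)) / 10000 = 2.503; rw [show wi {1} = 25030 from rfl]; norm_num
  · show ((wi {2} : ℝ)) / 10000 = 2.803; rw [show wi {2} = 28030 from rfl]; norm_num
  · show ((wi {3} : ℝ)) / 10000 = 2.703; rw [show wi {3} = 27030 from rfl]; norm_num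
  · show ((wi {0,1} : ℝ)) / 10000 = 4.4045; rw [show wi {0,1} = 44045 from rfl]; norm_num
  · show ((wi {0,2} : ℝ)) / 10000 = 5.404; rw [show wi {0,2} = 54040 from rfl]; norm_num
  · show ((wi {0,3} : ℝ)) / 10000 = 5.304; rw [show wi {0,3} = 53040 from rfl]; norm_num
  · show ((wi {1,2} : ℝ)) / 10000 = 5.304; rw [show wi {1,2} = 53040 from rfl]; norm_num
  · show ((wi {1,3} : ℝ)) / 10000 = 5.204; rw [show wi {1,3} = 52040 from rfl]; norm_num
  · show ((wi {2,3} : ℝ)) / 10000 = 4.1045; rw [show wi {2,3} = 41045 from rfl]; norm_num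
  · show ((wi {0,1,2} : ℝ)) / 10000 = 6.6045; rw [show wi {0,1,2} = 66045 from rfl]; norm_num
  · show ((wi {0,1,3} : ℝ)) / 10000 = 6.5045; rw [show wi {0,1,3} = 65045 from rfl]; norm_num
  · show ((wi {0,2,3} : ℝ)) / 10000 = 6.5045; rw [show wi {0,2,3} = 65045 from rfl]; norm_num
  · show ((wi {1,2,3} : ℝ)) / 10000 = 6.6045; rw [show wi {1,2,3} = 66045 from rfl]; norm_num
  · show ((wi {0,1,2,3} : ℝ)) / 10000 = 7.6045; rw [show wi {0,1,2,3} = 76045 from rfl]; norm_num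
  · rintro ⟨S₁, S₂, h1, h2, hb1, hb2⟩
    apply wi_nash
    refine ⟨S₁, S₂, h1, h2, fun S₁' hs => ?_, fun S₂' hs => ?_⟩
    · have := hb1 S₁' hs
      rw [sum_vr, sum_vr] at this
      have := (div_le_div_iff_of_pos_right (c := (10000:ℝ)) (by norm_num)).mp this
      exact_mod_cast this
    · have := hb2 S₂' hs
      rw [sum_vr, sum_vr] at this
      have := (div_le_div_iff_of_pos_right (c := (10000:ℝ)) (by norm_num)).mp this
      exact_mod_cast this
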